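/- Let n be a positive integer, z : Fin n → ℝ, and Z a real n×n matrix. Suppose (i) the (n+1)×(n+1) block matrix [[Z, z], [zᵀ, 1]] (formed with Matrix.fromBlocks from Z, the column vector z, the row vector zᵀ, and the 1×1 block with entry 1) is positive semidefinite, (ii) the diagonal of Z equals z (Matrix.diag Z = z), and (iii) rank Z = 1. Then there exists a real scalar λ ≥ 1 such that for every index i, either z i = 0 or λ * z i = 1. In particular, all nonzero entries of z are equal to the common value 1/λ ∈ (0, 1]. -/

import Mathlib

open Matrix

/-- Entrywise bound for real PSD matrices: `(M i j)^2 ≤ M i i * M j j`. -/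
lemma psd_entry_sq_le {n : ℕ} {M : Matrix (Fin n) (Fin n) ℝ} (hM : M.PosSemidef)
    (i j : Fin n) : (M i j) ^ 2 ≤ M i i * M j j := by
  rcases eq_or_ne i j with rfl | hij
  · have h0 : 0 ≤ M i i := by simpa using hM.dotProduct_mulVec_nonneg (Pi.single i 1)
    nlinarith
  · have hsym : M j i = M i j := by
      have := congrFun (congrFun hM.1 i) j
      simpa using this
    have key : ∀ t : ℝ, 0 ≤ M i i * (t * t) + (2 * M i j) * t + M j j := by
      intro t
      have := hM.dotProduct_mulVec_nonneg (t • (Pi.single i 1 : Fin n → ℝ) + Pi.single j 1)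
      simp only [star_trivial, mulVec_add, mulVec_smul, mulVec_single, dotProduct_add,
        add_dotProduct, smul_dotProduct, dotProduct_single, single_dotProduct, smul_eq_mul,
        Pi.add_apply, Pi.smul_apply, Pi.single_apply, mul_one, Matrix.col_apply,
        MulOpposite.op_one, one_smul] at this
      rw [hsym] at this
      nlinarith [this]
    have := discrim_le_zero key
    rw [discrim] at this
    nlinarith

/-- Rank-one analysis of the SDP relaxation of the binary allocation constraint: if
`[[Z, z], [zᵀ, 1]] ⪰ 0`, `diag Z = z` and `rank Z = 1`, then there is a scalar `λ ≥ 1`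
such that every entry of `z` is either `0` or `1/λ`. -/
theorem stmt_13 {n : ℕ} (hn : 0 < n) (z : Fin n → ℝ) (Z : Matrix (Fin n) (Fin n) ℝ)
    (hpsd : (Matrix.fromBlocks Z (Matrix.replicateCol (Fin 1) z) (Matrix.replicateRow (Fin 1) z)
      (1 : Matrix (Fin 1) (Fin 1) ℝ)).PosSemidef)
    (hdiag : Matrix.diag Z = z)
    (hrank : Z.rank = 1) :
    ∃ lam : ℝ, 1 ≤ lam ∧ ∀ i, z i = 0 ∨ lam * z i = 1 := by
  -- Schur complement: M = Z - z zᵀ is PSD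
  have hrow : Matrix.replicateRow (Fin 1) z = (Matrix.replicateCol (Fin 1) z)ᴴ := by
    rw [conjTranspose_replicateCol, star_trivial]
  rw [hrow] at hpsd
  haveI : Invertible (1 : Matrix (Fin 1) (Fin 1) ℝ) := invertibleOne
  have hM : (Z - Matrix.replicateCol (Fin 1) z * Matrix.replicateRow (Fin 1) z).PosSemidef := by
    have := (Matrix.PosDef.fromBlocks₂₂ Z (Matrix.replicateCol (Fin 1) z)
      (Matrix.PosDef.one)).mp hpsd
    rwa [inv_one, Matrix.mul_one, ← hrow] at this
  set M : Matrix (Fin n) (Fin n) ℝ := Z - Matrix.replicateCol (Fin 1) z * Matrix.replicateRow (Fin 1) z with hMdef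
  have hMentry : ∀ i j, M i j = Z i j - z i * z j := by
    intro i j
    simp [hMdef, Matrix.sub_apply, Matrix.mul_apply, Fin.sum_univ_one]
  have hZdiag : ∀ i, Z i i = z i := fun i => congrFun hdiag i
  -- diagonal of M nonneg: z i - z i ^2 ≥ 0, so 0 ≤ z i ≤ 1
  have hz01 : ∀ i, 0 ≤ z i ∧ z i ≤ 1 := by
    intro i
    have h0 : 0 ≤ M i i := by simpa using hM.dotProduct_mulVec_nonneg (Pi.single i 1)
    rw [hMentry, hZdiag] at h0
    constructor <;> nlinarith
  -- Z is symmetric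
  have hZsym : ∀ i j, Z j i = Z i j := by
    intro i j
    have h1 : M j i = M i j := by
      have := congrFun (congrFun hM.1 i) j
      simpa using this
    have h2 : Z j i - z j * z i = Z i j - z i * z j := by
      rw [← hMentry, ← hMentry, h1]
    linear_combination h2
  -- rank one: vanishing 2×2 minors for the full matrix Z
  have hminor : ∀ i j, Z i j ^ 2 = z i * z j := by
    intro i j
    rcases eq_or_ne i j with rfl | hij
    · rw [hZdiag i]; ring
    by_contra hne
    -- columns i and j of Z are linearly independent
    have hli : LinearIndependent ℝ ![(fun k => Z k i), (fun k => Z k j)] := by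
      rw [LinearIndependent.pair_iff]
      intro s t hst
      have hi := congrFun hst i
      have hj := congrFun hst j
      simp only [Pi.add_apply, Pi.smul_apply, smul_eq_mul, Pi.zero_apply] at hi hj
      rw [hZdiag] at hi
      rw [hZsym i j, hZdiag] at hj
      have hd : z i * z j - Z i j ^ 2 ≠ 0 := fun h => hne (by linarith)
      have hs : s * (z i * z j - Z i j ^ 2) = 0 := by linear_combination z j * hi - Z i j * hj
      have ht : t * (z i * z j - Z i j ^ 2) = 0 := by linear_combination z i * hj - Z i j * hi
      exact ⟨(mul_eq_zero.mp hs).resolve_right hd, (mul_eq_zero.mp ht).resolve_right hd⟩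
    have hspan : Submodule.span ℝ (Set.range ![(fun k => Z k i), (fun k => Z k j)])
        ≤ LinearMap.range Z.mulVecLin := by
      rw [Submodule.span_le, Set.range_subset_iff]
      intro k
      fin_cases k
      · exact ⟨Pi.single i 1, by ext k; simp [Matrix.mulVecLin_apply]⟩
      · exact ⟨Pi.single j 1, by ext k; simp [Matrix.mulVecLin_apply]⟩
    have h2 : Module.finrank ℝ (Submodule.span ℝ
        (Set.range ![(fun k => Z k i), (fun k => Z k j)])) = 2 := by
      rw [finrank_span_eq_card hli]
      simp
    have hle : 2 ≤ Z.rank := h2 ▸ Submodule.finrank_mono hspan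
    omega
  -- all nonzero entries of z are equal
  have heq : ∀ i j, z i ≠ 0 → z j ≠ 0 → z i = z j := by
    intro i j hi hj
    rcases eq_or_ne i j with rfl | hij
    · rfl
    have hp : 0 < z i := lt_of_le_of_ne (hz01 i).1 (Ne.symm hi)
    have hq : 0 < z j := lt_of_le_of_ne (hz01 j).1 (Ne.symm hj)
    have hp1 := (hz01 i).2
    have hq1 := (hz01 j).2
    have hr2 := hminor i j
    have hMb := psd_entry_sq_le hM i j
    rw [hMentry, hMentry, hMentry, hZdiag, hZdiag] at hMb
    -- (Z i j - z i z j)^2 ≤ (z i - z i^2)(z j - z j^2)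
    have hsum : z i + z j ≤ 2 * Z i j := by nlinarith [mul_pos hp hq]
    nlinarith [sq_nonneg (z i - z j), sq_nonneg (z i + z j)]
  by_cases hall : ∀ i, z i = 0
  · exact ⟨1, le_refl 1, fun i => Or.inl (hall i)⟩
  · push_neg at hall
    obtain ⟨i0, hi0⟩ := hall
    have hp : 0 < z i0 := lt_of_le_of_ne (hz01 i0).1 (Ne.symm hi0)
    refine ⟨1 / z i0, ?_, ?_⟩
    · rw [le_div_iff₀ hp, one_mul]; exact (hz01 i0).2
    · intro i
      by_cases hi : z i = 0
      · exact Or.inl hi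
      · right
        rw [heq i i0 hi hi0, one_div, inv_mul_cancel₀ hi0]
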